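/- Let G be a finite simple graph on vertex set I whose free partially commutative Lie algebra n⁺ (generated by e_i, i ∈ I, with relations [e_i, e_j] = 0 for non-adjacent i, j) is graded by Q_+ = ⊕_i Z_+ α_i via deg(e_i) = α_i. Then the Hilbert series of n⁺'s universal enveloping algebra satisfies H(U(n⁺)) = (Σ_{γ ∈ Ω} (-1)^{ht(γ)} e^γ)^{-1}, where Ω is the set of sums of distinct pairwise non-adjacent vertices' generators α_i (i.e., e^γ ranges over independent subsets S ⊂ I with γ = Σ_{i ∈ S} α_i and ht(γ) = |S|). -/

import Mathlib

/-- The commutation relation on the free monoid: two letters may be exchanged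
whenever they are not adjacent in `G`. -/
def traceRel {V : Type*} (G : SimpleGraph V) : FreeMonoid V → FreeMonoid V → Prop :=
  fun x y => ∃ a b : V, ¬ G.Adj a b ∧
    x = FreeMonoid.of a * FreeMonoid.of b ∧ y = FreeMonoid.of b * FreeMonoid.of a

/-- The congruence on the free monoid generated by the commutation relations. -/
def traceCon {V : Type*} (G : SimpleGraph V) : Con (FreeMonoid V) := conGen (traceRel G)

/-- The free partially commutative monoid (trace monoid) `M(I, G)` associated to `G`. -/
abbrev TraceMonoid {V : Type*} (G : SimpleGraph V) := (traceCon G).Quotient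

/-- The element of the trace monoid represented by a list of letters. -/
def traceMk {V : Type*} (G : SimpleGraph V) (L : List V) : TraceMonoid G :=
  (traceCon G).mk' (FreeMonoid.ofList L)

/-- The multiplicity of the letter `i` in the initial alphabet multiset `IA_m(w)`:
the largest `m` such that `w = u · iᵐ`. -/
noncomputable def IAcount {V : Type*} (G : SimpleGraph V) (w : TraceMonoid G) (i : V) : ℕ :=
  sSup {m : ℕ | ∃ u : TraceMonoid G, w = u * (traceMk G [i]) ^ m}

/-- The initial alphabet `IA(w)` of a trace: the set of letters `i` with `w = u · i`. -/
def IAset {V : Type*} (G : SimpleGraph V) (w : TraceMonoid G) : Set V :=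
  {i | ∃ u : TraceMonoid G, w = u * traceMk G [i]}

/-- The Hilbert series of `U(n⁺)` for the free partially commutative Lie algebra of `G`:
`U(n⁺)` has a basis indexed by the trace monoid `M(I,G)`, so the coefficient at a
multidegree `α` is the number of traces with letter multiplicities `α`. -/
noncomputable def traceSeries {V : Type*} [Fintype V] [DecidableEq V] (G : SimpleGraph V) :
    MvPowerSeries V ℚ :=
  fun α : V →₀ ℕ =>
    (Nat.card {w : TraceMonoid G //
      ∃ L : List V, traceMk G L = w ∧ ∀ v, L.count v = α v} : ℚ)

/-- The signed independent-set series `Σ_{γ ∈ Ω} (-1)^{ht γ} e^γ`: the sum over independent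
subsets `s ⊆ V` of `(-1)^{|s|}` times the corresponding squarefree monomial. -/
noncomputable def indepSeries {V : Type*} [Fintype V] [DecidableEq V] (G : SimpleGraph V)
    [DecidableRel G.Adj] : MvPowerSeries V ℚ :=
  ∑ s ∈ Finset.univ.filter (fun s : Finset V => ∀ x ∈ s, ∀ y ∈ s, ¬ G.Adj x y),
    MvPowerSeries.monomial (∑ i ∈ s, Finsupp.single i 1) ((-1 : ℚ) ^ s.card)


namespace CFaux
open List FreeMonoid

variable {V : Type*} [DecidableEq V] (G : SimpleGraph V)

/-- projection of a word onto the pair of letters {a,b} -/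
def proj (a b : V) (L : List V) : List V := L.filter (fun x => x = a ∨ x = b)

lemma proj_append (a b : V) (L L' : List V) :
    proj a b (L ++ L') = proj a b L ++ proj a b L' := by simp [proj]

lemma proj_cons (a b c : V) (L : List V) :
    proj a b (c :: L) = if c = a ∨ c = b then c :: proj a b L else proj a b L := by
  simp only [proj, List.filter_cons]
  by_cases h : c = a ∨ c = b <;> simp [h]

lemma mem_proj {a b x : V} {L : List V} : x ∈ proj a b L ↔ x ∈ L ∧ (x = a ∨ x = b) := by
  simp [proj]

variable {G}

/-- Invariance of dependent-pair projections under the trace congruence. -/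
lemma proj_eq_of_rel {x y : FreeMonoid V} (h : traceCon G x y) (a b : V)
    (hab : G.Adj a b ∨ a = b) : proj a b x.toList = proj a b y.toList := by
  have h' : ConGen.Rel (traceRel G) x y := h
  clear h
  induction h' with
  | of u v huv =>
    obtain ⟨c, d, hcd, rfl, rfl⟩ := huv
    by_cases hcdeq : c = d
    · subst hcdeq; rfl
    have : ¬ (c = a ∨ c = b) ∨ ¬ (d = a ∨ d = b) := by
      by_contra hcon
      push_neg at hcon
      obtain ⟨hc, hd⟩ := hcon
      rcases hab with hadj | rfl
      · rcases hc with rfl | rfl <;> rcases hd with rfl | rfl <;>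
          first
          | exact hcdeq rfl
          | exact hcd hadj
          | exact hcd hadj.symm
      · rcases hc with rfl | rfl <;> rcases hd with rfl | rfl <;> exact hcdeq rfl
    show proj a b [c, d] = proj a b [d, c]
    rcases this with hc | hd
    · simp [proj_cons, hc]
    · simp [proj_cons, hd]
  | refl => rfl
  | symm _ ih => exact ih.symm
  | trans _ _ ih1 ih2 => exact ih1.trans ih2
  | mul _ _ ih1 ih2 =>
    simp only [toList_mul, proj_append, ih1, ih2]

lemma count_eq_length_proj (v : V) (L : List V) : L.count v = (proj v v L).length := by
  induction L with
  | nil => rfl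
  | cons c L ih =>
    rw [proj_cons, List.count_cons]
    by_cases h : c = v
    · simp [h, ih]
    · simp [h, ih]

lemma count_eq_of_rel {l l' : List V} (h : traceCon G (ofList l) (ofList l')) (v : V) :
    l.count v = l'.count v := by
  have := proj_eq_of_rel h v v (Or.inr rfl)
  simp only [toList_ofList] at this
  rw [count_eq_length_proj, count_eq_length_proj, this]

/-- the basic swap step -/
lemma rel_swap {a b : V} (hab : ¬ G.Adj a b) (X Y : List V) :
    traceCon G (ofList (X ++ b :: a :: Y)) (ofList (X ++ a :: b :: Y)) := by
  have hcore : traceCon G (ofList [b, a]) (ofList [a, b]) := by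
    apply ConGen.Rel.of
    exact ⟨b, a, fun h => hab h.symm, rfl, rfl⟩
  have : traceCon G (ofList X * (ofList [b, a] * ofList Y))
      (ofList X * (ofList [a, b] * ofList Y)) :=
    (traceCon G).mul ((traceCon G).refl _) ((traceCon G).mul hcore ((traceCon G).refl _))
  simpa only [← ofList_append, List.cons_append, List.nil_append] using this

lemma rel_move_front {a : V} {P : List V} (h : ∀ x ∈ P, ¬ G.Adj a x) (S : List V) :
    traceCon G (ofList (P ++ a :: S)) (ofList (a :: (P ++ S))) := by
  induction P with
  | nil => exact (traceCon G).refl _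
  | cons p P ih =>
    have h1 : traceCon G (ofList (P ++ a :: S)) (ofList (a :: (P ++ S))) :=
      ih (fun x hx => h x (List.mem_cons_of_mem _ hx))
    have h2 : traceCon G (ofList (p :: (P ++ a :: S))) (ofList (p :: a :: (P ++ S))) := by
      have := (traceCon G).mul ((traceCon G).refl (of p)) h1
      simpa only [← ofList_cons] using this
    have h3 : traceCon G (ofList (p :: a :: (P ++ S))) (ofList (a :: p :: (P ++ S))) := by
      have := rel_swap (G := G) (a := a) (b := p) (h p List.mem_cons_self) [] (P ++ S)
      simpa using this
    exact (traceCon G).trans h2 h3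

lemma rel_move_back {a : V} {S : List V} (h : ∀ x ∈ S, ¬ G.Adj a x) (P : List V) :
    traceCon G (ofList (P ++ a :: S)) (ofList ((P ++ S) ++ [a])) := by
  induction S generalizing P with
  | nil => simpa using (traceCon G).refl (ofList (P ++ [a]))
  | cons x S ih =>
    have h1 : traceCon G (ofList (P ++ a :: x :: S)) (ofList (P ++ x :: a :: S)) := by
      exact rel_swap (fun hadj => (h x List.mem_cons_self) hadj.symm) P S
    have h2 : traceCon G (ofList ((P ++ [x]) ++ a :: S)) (ofList (((P ++ [x]) ++ S) ++ [a])) :=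
      ih (fun y hy => h y (List.mem_cons_of_mem _ hy)) (P ++ [x])
    have e1 : P ++ x :: a :: S = (P ++ [x]) ++ a :: S := by simp
    have e2 : ((P ++ [x]) ++ S) ++ [a] = (P ++ x :: S) ++ [a] := by simp
    rw [e1] at h1
    rw [e2] at h2
    exact (traceCon G).trans h1 h2

lemma exists_split_first {a : V} {l : List V} (h : a ∈ l) :
    ∃ P S, l = P ++ a :: S ∧ a ∉ P := by
  induction l with
  | nil => simp at h
  | cons c l ih =>
    by_cases hca : c = a
    · subst hca; exact ⟨[], l, rfl, by simp⟩
    · have : a ∈ l := by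
        rcases List.mem_cons.1 h with h' | h'
        · exact absurd h'.symm hca
        · exact h'
      obtain ⟨P, S, rfl, hP⟩ := ih this
      refine ⟨c :: P, S, rfl, ?_⟩
      intro hmem
      rcases List.mem_cons.1 hmem with h' | h'
      · exact hca h'.symm
      · exact hP h'

/-- The projection criterion implies trace equivalence. -/
lemma rel_of_proj : ∀ (l l' : List V),
    (∀ a b, (G.Adj a b ∨ a = b) → proj a b l = proj a b l') →
    traceCon G (ofList l) (ofList l')
  | [], l', h => by
    have : l' = [] := by
      cases l' with
      | nil => rfl
      | cons c t =>
        have := h c c (Or.inr rfl)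
        rw [proj_cons] at this
        simp only [or_self, if_pos rfl] at this
        exact absurd this (by simp [proj])
    rw [this]
    exact (traceCon G).refl _
  | a :: t, l', h => by
    -- a occurs in l'
    have ha : a ∈ l' := by
      have := h a a (Or.inr rfl)
      rw [proj_cons] at this
      simp only [or_self, if_pos rfl] at this
      have : a ∈ proj a a l' := this ▸ (List.mem_cons_self : a ∈ a :: proj a a t)
      exact (mem_proj.1 this).1
    obtain ⟨P, S, rfl, hP⟩ := exists_split_first ha
    -- letters of P are independent from a
    have hind : ∀ x ∈ P, ¬ G.Adj a x := by
      intro x hx hadj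
      have hxa : x ≠ a := fun hh => hP (hh ▸ hx)
      have hproj := h a x (Or.inl hadj)
      rw [proj_cons, if_pos (Or.inl rfl), proj_append, proj_cons, if_pos (Or.inl rfl)] at hproj
      -- LHS head is a; RHS head is in proj a x P which consists of x's
      have hxP : x ∈ proj a x P := mem_proj.2 ⟨hx, Or.inr rfl⟩
      cases hPP : proj a x P with
      | nil => rw [hPP] at hxP; simp at hxP
      | cons y Y =>
        have hy : y ∈ proj a x P := hPP ▸ (List.mem_cons_self : y ∈ y :: Y)
        have hy' := mem_proj.1 hy
        have hya : y = x := by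
          rcases hy'.2 with rfl | rfl
          · exact absurd hy'.1 hP
          · rfl
        rw [hPP] at hproj
        simp only [List.cons_append] at hproj
        injection hproj with h1 _
        rw [hya] at h1
        exact hxa h1.symm
    -- move a to the front of l'
    have hmove : traceCon G (ofList (P ++ a :: S)) (ofList (a :: (P ++ S))) :=
      rel_move_front hind S
    -- projections of t and P ++ S agree
    have htail : ∀ c d, (G.Adj c d ∨ c = d) → proj c d t = proj c d (P ++ S) := by
      intro c d hcd
      have h1 : proj c d (a :: t) = proj c d (a :: (P ++ S)) := by
        have h2 := proj_eq_of_rel hmove c d hcd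
        simp only [toList_ofList] at h2
        rw [h c d hcd, h2]
      rw [proj_cons, proj_cons] at h1
      by_cases hac : a = c ∨ a = d
      · rw [if_pos hac, if_pos hac] at h1
        exact List.tail_eq_of_cons_eq h1
      · rwa [if_neg hac, if_neg hac] at h1
    have IH : traceCon G (ofList t) (ofList (P ++ S)) := rel_of_proj t (P ++ S) htail
    have step1 : traceCon G (ofList (a :: t)) (ofList (a :: (P ++ S))) := by
      have := (traceCon G).mul ((traceCon G).refl (of a)) IH
      simpa only [← ofList_cons] using this
    exact (traceCon G).trans step1 ((traceCon G).symm hmove)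

/-- The projection criterion characterises trace equivalence. -/
lemma rel_iff_proj (l l' : List V) :
    traceCon G (ofList l) (ofList l') ↔
      ∀ a b, (G.Adj a b ∨ a = b) → proj a b l = proj a b l' := by
  constructor
  · intro h a b hab
    have := proj_eq_of_rel h a b hab
    simpa only [toList_ofList] using this
  · exact rel_of_proj l l'

end CFaux

namespace CFaux
open List FreeMonoid

set_option linter.unusedSectionVars false

variable {V : Type*} [DecidableEq V] {G : SimpleGraph V}

/-- word-level right cancellation -/
lemma rel_cancel_right {l₁ l₂ : List V} {i : V}
    (h : traceCon G (ofList (l₁ ++ [i])) (ofList (l₂ ++ [i]))) :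
    traceCon G (ofList l₁) (ofList l₂) := by
  rw [rel_iff_proj] at h ⊢
  intro a b hab
  have := h a b hab
  rw [proj_append, proj_append] at this
  exact List.append_cancel_right this

/-- word-level last-letter exchange lemma -/
lemma rel_exchange {l₁ l₂ : List V} {i j : V} (hij : i ≠ j)
    (h : traceCon G (ofList (l₁ ++ [i])) (ofList (l₂ ++ [j]))) :
    ¬ G.Adj i j ∧ ∃ M : List V,
      traceCon G (ofList l₁) (ofList (M ++ [j])) ∧
      traceCon G (ofList l₂) (ofList (M ++ [i])) := by
  have hproj := (rel_iff_proj _ _).1 h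
  -- first: ¬ Adj i j
  have hnadj : ¬ G.Adj i j := by
    intro hadj
    have := hproj i j (Or.inl hadj)
    rw [proj_append, proj_append] at this
    have h1 : proj i j [i] = [i] := by simp [proj_cons, proj]
    have h2 : proj i j [j] = [j] := by simp [proj_cons, proj]
    rw [h1, h2] at this
    have := congrArg List.reverse this
    simp only [List.reverse_append, List.reverse_cons, List.reverse_nil, List.nil_append,
      List.singleton_append] at this
    injection this with h3 _
    exact hij h3
  refine ⟨hnadj, ?_⟩
  -- j occurs in l₁
  have hcount : (l₁ ++ [i]).count j = (l₂ ++ [j]).count j := count_eq_of_rel h j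
  have hj : j ∈ l₁ := by
    have h1 : List.count j [i] = 0 := List.count_eq_zero.2 (by simp [Ne.symm hij])
    have h2 : List.count j [j] = 1 := by simp
    rw [List.count_append, List.count_append, h1, h2] at hcount
    have : 0 < l₁.count j := by omega
    exact List.count_pos_iff.1 this
  -- split at the last occurrence of j
  have hjrev : j ∈ l₁.reverse := by simpa using hj
  obtain ⟨P, S, hsplit, hPj⟩ := exists_split_first hjrev
  have hl₁ : l₁ = S.reverse ++ j :: P.reverse := by
    have := congrArg List.reverse hsplit
    simpa using this
  have hjS : j ∉ P.reverse := by simpa using hPj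
  -- letters after the last j are independent of j
  have hindep : ∀ x ∈ P.reverse, ¬ G.Adj j x := by
    intro x hx hadj
    have hxj : x ≠ j := fun hh => hjS (hh ▸ hx)
    have hp := hproj j x (Or.inl hadj)
    have hixj : i ∉ ([j, x] : List V) := by
      intro hmem
      rcases List.mem_cons.1 hmem with rfl | hmem'
      · exact hij rfl
      · rcases List.mem_singleton.1 hmem' with rfl
        exact hnadj hadj.symm
    have hi1 : proj j x [i] = [] := by
      simp only [proj, List.filter, decide_eq_true_eq]
      have : ¬ (i = j ∨ i = x) := by
        intro hmem
        exact hixj (by rcases hmem with rfl | rfl <;> simp)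
      simp [this]
    have hj1 : proj j x [j] = [j] := by simp [proj_cons, proj]
    rw [proj_append, proj_append, hi1, hj1, List.append_nil, hl₁, proj_append, proj_cons,
      if_pos (Or.inl rfl)] at hp
    -- LHS = proj(S.rev) ++ j :: proj(P.rev); ends with an x since x ∈ P.rev; RHS ends with j
    have hxPr : x ∈ proj j x P.reverse := mem_proj.2 ⟨hx, Or.inr rfl⟩
    have hne : proj j x P.reverse ≠ [] := fun hh => by rw [hh] at hxPr; simp at hxPr
    obtain hnil | ⟨Z, z, hZ⟩ := (proj j x P.reverse).eq_nil_or_concat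
    · exact hne hnil
    have hzx : z = x := by
      have hzmem : z ∈ proj j x P.reverse := by rw [hZ]; simp
      have := mem_proj.1 hzmem
      rcases this.2 with rfl | rfl
      · exact absurd this.1 hjS
      · rfl
    have hL : proj j x S.reverse ++ j :: proj j x P.reverse
        = (proj j x S.reverse ++ j :: Z) ++ [z] := by rw [hZ]; simp
    rw [hL] at hp
    have hlast := congrArg List.getLast? hp
    rw [List.getLast?_concat, List.getLast?_concat] at hlast
    injection hlast with h7
    rw [hzx] at h7
    exact hxj h7
  -- now l₁ ~ M ++ [j] with M = S.reverse ++ P.reverse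
  set M := S.reverse ++ P.reverse with hM
  have hrel1 : traceCon G (ofList l₁) (ofList (M ++ [j])) := by
    rw [hl₁]
    exact rel_move_back hindep S.reverse
  refine ⟨M, hrel1, ?_⟩
  -- l₂ ++ [j] ~ l₁ ++ [i] ~ M ++ [j] ++ [i] ~ M ++ [i] ++ [j]; cancel j
  have hrel2 : traceCon G (ofList (l₁ ++ [i])) (ofList ((M ++ [j]) ++ [i])) := by
    have := (traceCon G).mul hrel1 ((traceCon G).refl (ofList [i]))
    simpa only [← ofList_append] using this
  have hswap : traceCon G (ofList ((M ++ [j]) ++ [i])) (ofList ((M ++ [i]) ++ [j])) := by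
    have := rel_swap (G := G) (a := i) (b := j) hnadj M []
    simpa using this
  have : traceCon G (ofList (l₂ ++ [j])) (ofList ((M ++ [i]) ++ [j])) :=
    (traceCon G).trans ((traceCon G).symm h) ((traceCon G).trans hrel2 hswap)
  exact rel_cancel_right this

/-! ### Monoid level -/

variable (G)

/-- the generator of the trace monoid -/
noncomputable abbrev gen (i : V) : TraceMonoid G := traceMk G [i]

lemma traceMk_eq_iff (l l' : List V) :
    traceMk G l = traceMk G l' ↔ traceCon G (ofList l) (ofList l') := by
  rw [traceMk, traceMk]
  exact Con.eq _

lemma traceMk_mul (l l' : List V) :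
    traceMk G (l ++ l') = traceMk G l * traceMk G l' := by
  rw [traceMk, traceMk, traceMk, ofList_append, map_mul]

lemma traceMk_surjective : Function.Surjective (traceMk G) := by
  intro w
  obtain ⟨x, rfl⟩ := Quotient.exists_rep w
  exact ⟨x.toList, rfl⟩

lemma traceMk_nil : traceMk G [] = 1 := by
  rw [traceMk, ofList_nil, map_one]

variable {G}

lemma trace_cancel_right {w w' : TraceMonoid G} {i : V} (h : w * gen G i = w' * gen G i) :
    w = w' := by
  obtain ⟨l, rfl⟩ := traceMk_surjective G w
  obtain ⟨l', rfl⟩ := traceMk_surjective G w'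
  rw [← traceMk_mul, ← traceMk_mul, traceMk_eq_iff] at h
  rw [traceMk_eq_iff]
  exact rel_cancel_right h

lemma trace_exchange {w u : TraceMonoid G} {i j : V} (hij : i ≠ j)
    (h : w * gen G i = u * gen G j) :
    ¬ G.Adj i j ∧ ∃ v : TraceMonoid G, w = v * gen G j ∧ u = v * gen G i := by
  obtain ⟨l, rfl⟩ := traceMk_surjective G w
  obtain ⟨m, rfl⟩ := traceMk_surjective G u
  rw [← traceMk_mul, ← traceMk_mul, traceMk_eq_iff] at h
  obtain ⟨hnadj, M, h1, h2⟩ := rel_exchange hij h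
  refine ⟨hnadj, traceMk G M, ?_, ?_⟩
  · rw [← traceMk_mul, traceMk_eq_iff]; exact h1
  · rw [← traceMk_mul, traceMk_eq_iff]; exact h2

lemma gen_comm {i j : V} (h : ¬ G.Adj i j) : gen G i * gen G j = gen G j * gen G i := by
  rw [← traceMk_mul, ← traceMk_mul, traceMk_eq_iff]
  have := rel_swap (G := G) (a := j) (b := i) (fun h' => h h'.symm) [] []
  simpa using this

/-! ### the count (multidegree) function -/

variable (G)

noncomputable def cntHom : TraceMonoid G →* Multiplicative (V →₀ ℕ) :=
  Con.lift _ (FreeMonoid.lift (fun i => Multiplicative.ofAdd (Finsupp.single i 1)))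
    (by
      rw [traceCon]
      apply Con.conGen_le.2
      rintro x y ⟨a, b, -, rfl, rfl⟩
      rw [Con.ker_rel]
      simp only [map_mul, lift_eval_of]
      rw [← ofAdd_add, ← ofAdd_add, add_comm])

noncomputable def cnt (w : TraceMonoid G) : V →₀ ℕ := Multiplicative.toAdd (cntHom G w)

variable {G}

lemma cnt_mul (w u : TraceMonoid G) : cnt G (w * u) = cnt G w + cnt G u := by
  rw [cnt, map_mul]; rfl

lemma cnt_one : cnt G (1 : TraceMonoid G) = 0 := by
  rw [cnt, map_one]; rfl

lemma cnt_gen (i : V) : cnt G (gen G i) = Finsupp.single i 1 := by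
  have h : cntHom G (traceMk G [i]) = Multiplicative.ofAdd (Finsupp.single i 1) := by
    rw [traceMk]
    show (cntHom G) ((ofList [i] : FreeMonoid V) : TraceMonoid G) = _
    simp only [cntHom]
    rw [Con.lift_coe]
    show FreeMonoid.lift _ (FreeMonoid.of i) = _
    rw [lift_eval_of]
  rw [cnt, gen, h]
  rfl

lemma cnt_traceMk (l : List V) (v : V) : cnt G (traceMk G l) v = l.count v := by
  induction l with
  | nil => rw [traceMk_nil, cnt_one]; simp
  | cons a t ih =>
    rw [show (a :: t) = [a] ++ t from rfl, traceMk_mul, cnt_mul]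
    simp only [Finsupp.coe_add, Pi.add_apply, cnt_gen, ih, List.count_append,
      Finsupp.single_apply]
    congr 1
    by_cases h : a = v
    · subst h; simp
    · rw [if_neg h, List.count_eq_zero.2 (by simp [Ne.symm h])]

lemma eq_one_of_cnt_eq_zero {w : TraceMonoid G} (h : cnt G w = 0) : w = 1 := by
  obtain ⟨l, rfl⟩ := traceMk_surjective G w
  have : l = [] := by
    rw [List.eq_nil_iff_forall_not_mem]
    intro v hv
    have h2 := cnt_traceMk (G := G) l v
    rw [h] at h2
    simp only [Finsupp.coe_zero, Pi.zero_apply] at h2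
    exact absurd h2.symm (List.count_pos_iff.2 hv).ne'
  rw [this, traceMk_nil]

end CFaux

namespace CFaux
open List FreeMonoid Finset

set_option linter.unusedSectionVars false
set_option maxHeartbeats 1000000

variable {V : Type*} [DecidableEq V]

section Count

variable (G : SimpleGraph V)

noncomputable def Tset (α : V →₀ ℕ) : Finset (TraceMonoid G) :=
  letI := Classical.decEq (TraceMonoid G)
  ((α.toMultiset.toList).permutations.map (traceMk G)).toFinset

lemma count_toList (α : V →₀ ℕ) (v : V) : (α.toMultiset.toList).count v = α v := by
  rw [← Multiset.coe_count, Multiset.coe_toList, Finsupp.count_toMultiset]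

variable {G}

lemma mem_Tset {α : V →₀ ℕ} {w : TraceMonoid G} : w ∈ Tset G α ↔ cnt G w = α := by
  letI := Classical.decEq (TraceMonoid G)
  rw [Tset, List.mem_toFinset, List.mem_map]
  constructor
  · rintro ⟨L, hL, rfl⟩
    rw [List.mem_permutations] at hL
    ext v
    rw [cnt_traceMk, hL.count_eq, count_toList]
  · intro hw
    obtain ⟨L, rfl⟩ := traceMk_surjective G w
    refine ⟨L, ?_, rfl⟩
    rw [List.mem_permutations, List.perm_iff_count]
    intro v
    rw [count_toList, ← hw, cnt_traceMk]

lemma Tset_zero : Tset G 0 = {1} := by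
  ext w
  rw [mem_Tset, Finset.mem_singleton]
  constructor
  · exact eq_one_of_cnt_eq_zero
  · rintro rfl; exact cnt_one

end Count

/-! ### independent sets and their multidegrees -/

variable (G : SimpleGraph V)

def indepP (s : Finset V) : Prop := ∀ x ∈ s, ∀ y ∈ s, ¬ G.Adj x y

variable {G}

noncomputable def gam (s : Finset V) : V →₀ ℕ := ∑ i ∈ s, Finsupp.single i 1

lemma gam_empty : gam (∅ : Finset V) = 0 := by simp [gam]

lemma gam_erase {s : Finset V} {i : V} (hi : i ∈ s) :
    gam s = gam (s.erase i) + Finsupp.single i 1 := by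
  rw [gam, gam, Finset.sum_erase_add s _ hi]

lemma gam_insert {s : Finset V} {i : V} (hi : i ∉ s) :
    gam (insert i s) = gam s + Finsupp.single i 1 := by
  rw [gam, gam, Finset.sum_insert hi, add_comm]

lemma eq_empty_of_gam_eq_zero {s : Finset V} (h : gam s = 0) : s = ∅ := by
  by_contra hne
  obtain ⟨j, hj⟩ := Finset.nonempty_iff_ne_empty.2 hne
  have : gam s j = 0 := by rw [h]; rfl
  rw [gam] at this
  rw [Finsupp.finset_sum_apply] at this
  have : ∑ i ∈ s, (Finsupp.single i 1 : V →₀ ℕ) j = 0 := this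
  rw [Finset.sum_eq_zero_iff] at this
  have := this j hj
  simp at this

lemma indepP_mono {s t : Finset V} (hst : s ⊆ t) (h : indepP G t) : indepP G s :=
  fun x hx y hy => h x (hst hx) y (hst hy)

lemma indepP_insert_iff {s : Finset V} {j : V} :
    indepP G (insert j s) ↔ indepP G s ∧ ∀ x ∈ s, ¬ G.Adj j x := by
  constructor
  · intro h
    exact ⟨fun x hx y hy => h x (Finset.mem_insert_of_mem hx) y (Finset.mem_insert_of_mem hy),
      fun x hx => h j (Finset.mem_insert_self _ _) x (Finset.mem_insert_of_mem hx)⟩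
  · rintro ⟨h1, h2⟩ x hx y hy
    rcases Finset.mem_insert.1 hx with hxj | hxs
    · subst hxj
      rcases Finset.mem_insert.1 hy with hyj | hys
      · subst hyj; exact G.irrefl
      · exact h2 y hys
    · rcases Finset.mem_insert.1 hy with hyj | hys
      · subst hyj; exact fun hadj => h2 x hxs hadj.symm
      · exact h1 x hxs y hys

lemma indepP_empty : indepP G (∅ : Finset V) := fun x hx => by simp at hx

/-! ### the pick function -/

variable [Fintype V]

noncomputable def pick (D : Finset V) (hD : D.Nonempty) : V :=
  (Fintype.equivFin V).symm ((D.image (Fintype.equivFin V)).min' (hD.image _))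

lemma pick_mem (D : Finset V) (hD : D.Nonempty) : pick D hD ∈ D := by
  have := Finset.min'_mem (D.image (Fintype.equivFin V)) (hD.image _)
  rw [Finset.mem_image] at this
  obtain ⟨v, hv, hveq⟩ := this
  rw [pick, ← hveq, Equiv.symm_apply_apply]
  exact hv

lemma pick_min (D : Finset V) (hD : D.Nonempty) {j : V} (hj : j ∈ D) :
    (Fintype.equivFin V) (pick D hD) ≤ (Fintype.equivFin V) j := by
  rw [pick, Equiv.apply_symm_apply]
  exact Finset.min'_le _ _ (Finset.mem_image_of_mem _ hj)

lemma pick_eq {D : Finset V} {hD : D.Nonempty} {i : V} (hi : i ∈ D)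
    (hmin : ∀ j ∈ D, (Fintype.equivFin V) i ≤ (Fintype.equivFin V) j) : pick D hD = i := by
  have h1 := pick_min D hD hi
  have h2 := hmin _ (pick_mem D hD)
  exact (Fintype.equivFin V).injective (_root_.le_antisymm h1 h2)

/-! ### the involution -/

variable (G)

open scoped Classical in
noncomputable def Dset (s : Finset V) (w : TraceMonoid G) : Finset V :=
  s ∪ Finset.univ.filter (fun j => (∃ u, w = u * gen G j) ∧ indepP G (insert j s))

variable {G}

lemma mem_Dset {s : Finset V} {w : TraceMonoid G} {j : V} :
    j ∈ Dset G s w ↔ j ∈ s ∨ ((∃ u, w = u * gen G j) ∧ indepP G (insert j s)) := by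
  classical
  rw [Dset]
  simp

lemma exists_IA {w : TraceMonoid G} (hw : w ≠ 1) : ∃ u j, w = u * gen G j := by
  obtain ⟨L, rfl⟩ := traceMk_surjective G w
  obtain rfl | ⟨L', a, rfl⟩ := L.eq_nil_or_concat
  · exact absurd (traceMk_nil G) hw
  · exact ⟨traceMk G L', a, by rw [List.concat_eq_append, traceMk_mul]⟩

lemma Dset_nonempty {α : V →₀ ℕ} (hα : α ≠ 0) {s : Finset V} {w : TraceMonoid G}
    (hsum : gam s + cnt G w = α) : (Dset G s w).Nonempty := by
  rcases s.eq_empty_or_nonempty with rfl | ⟨j, hj⟩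
  · have hw : w ≠ 1 := by
      rintro rfl
      rw [gam_empty, cnt_one, add_zero] at hsum
      exact hα hsum.symm
    obtain ⟨u, j, hu⟩ := exists_IA hw
    refine ⟨j, mem_Dset.2 (Or.inr ⟨⟨u, hu⟩, ?_⟩)⟩
    intro x hx y hy
    simp only [Finset.mem_insert, Finset.notMem_empty, or_false] at hx hy
    subst hx; subst hy
    exact G.irrefl
  · exact ⟨j, mem_Dset.2 (Or.inl hj)⟩

variable (G)

open scoped Classical in
noncomputable def ginv (x : (_ : Finset V) × TraceMonoid G) : (_ : Finset V) × TraceMonoid G :=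
  if h : (Dset G x.1 x.2).Nonempty then
    if pick (Dset G x.1 x.2) h ∈ x.1 then
      ⟨x.1.erase (pick (Dset G x.1 x.2) h), x.2 * gen G (pick (Dset G x.1 x.2) h)⟩
    else if h2 : ∃ u, x.2 = u * gen G (pick (Dset G x.1 x.2) h) then
      ⟨insert (pick (Dset G x.1 x.2) h) x.1, Classical.choose h2⟩
    else x
  else x

variable {G}

/-- The master specification of the involution. -/
lemma ginv_spec {α : V →₀ ℕ} (hα : α ≠ 0) {s : Finset V} {w : TraceMonoid G}
    (hind : indepP G s) (hsum : gam s + cnt G w = α) :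
    ∃ s' w', ginv G ⟨s, w⟩ = ⟨s', w'⟩ ∧ indepP G s' ∧ gam s' + cnt G w' = α ∧
      (s'.card = s.card + 1 ∨ s.card = s'.card + 1) ∧ ginv G ⟨s', w'⟩ = ⟨s, w⟩ := by
  have hD : (Dset G s w).Nonempty := Dset_nonempty hα hsum
  set i := pick (Dset G s w) hD with hidef
  have hiD : i ∈ Dset G s w := pick_mem _ _
  by_cases his : i ∈ s
  · -- case A : remove i from s, append it to w
    set s' := s.erase i with hs'
    set w' := w * gen G i with hw'
    have hg1 : ginv G ⟨s, w⟩ = ⟨s', w'⟩ := by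
      simp only [ginv]
      rw [dif_pos hD, if_pos his]
    have hind' : indepP G s' := indepP_mono (Finset.erase_subset _ _) hind
    have hsum' : gam s' + cnt G w' = α := by
      rw [hw', cnt_mul, cnt_gen, ← hsum, gam_erase his]
      abel
    have hcard : s.card = s'.card + 1 := (Finset.card_erase_add_one his).symm
    -- the new Dset still has i as its minimum
    have hiD' : i ∈ Dset G s' w' := by
      refine mem_Dset.2 (Or.inr ⟨⟨w, rfl⟩, ?_⟩)
      rw [Finset.insert_erase his]
      exact hind
    have hD' : (Dset G s' w').Nonempty := ⟨i, hiD'⟩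
    have hpick' : pick (Dset G s' w') hD' = i := by
      apply pick_eq hiD'
      intro j hj
      rcases mem_Dset.1 hj with hjs' | ⟨⟨u, hu⟩, hins⟩
      · exact pick_min _ _ (mem_Dset.2 (Or.inl (Finset.mem_of_mem_erase hjs')))
      · by_cases hji : j = i
        · subst hji; exact le_refl _
        · have hij : i ≠ j := fun hh => hji hh.symm
          obtain ⟨hnadj, v, hv, hv2⟩ := trace_exchange hij hu
          apply pick_min
          refine mem_Dset.2 (Or.inr ⟨⟨v, hv⟩, ?_⟩)
          rw [indepP_insert_iff]
          refine ⟨hind, ?_⟩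
          intro x hx
          by_cases hxi : x = i
          · subst hxi; exact fun hadj => hnadj hadj.symm
          · have hxs' : x ∈ s' := Finset.mem_erase.2 ⟨hxi, hx⟩
            exact (indepP_insert_iff.1 hins).2 x hxs'
    have hg2 : ginv G ⟨s', w'⟩ = ⟨s, w⟩ := by
      simp only [ginv]
      rw [dif_pos hD', hpick']
      rw [if_neg (Finset.notMem_erase i s)]
      have h2 : ∃ u, w' = u * gen G i := ⟨w, rfl⟩
      rw [dif_pos h2]
      have hchoose : Classical.choose h2 = w := by
        have := Classical.choose_spec h2
        exact trace_cancel_right this.symm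
      rw [hchoose, Finset.insert_erase his]
    exact ⟨s', w', hg1, hind', hsum', Or.inr hcard, hg2⟩
  · -- case B : i is in the initial alphabet of w; move it to s
    obtain ⟨hIA, hins⟩ : (∃ u, w = u * gen G i) ∧ indepP G (insert i s) := by
      rcases mem_Dset.1 hiD with h | h
      · exact absurd h his
      · exact h
    set s' := insert i s with hs'
    have hg1 : ginv G ⟨s, w⟩ = ⟨s', Classical.choose hIA⟩ := by
      simp only [ginv]
      rw [dif_pos hD, if_neg his, dif_pos hIA]
    set u := Classical.choose hIA with hu
    have huspec : w = u * gen G i := Classical.choose_spec hIA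
    have hind' : indepP G s' := hins
    have hsum' : gam s' + cnt G u = α := by
      rw [hs', gam_insert his, ← hsum, huspec, cnt_mul, cnt_gen]
      abel
    have hcard : s'.card = s.card + 1 := Finset.card_insert_of_notMem his
    have hiD' : i ∈ Dset G s' u := mem_Dset.2 (Or.inl (Finset.mem_insert_self _ _))
    have hD' : (Dset G s' u).Nonempty := ⟨i, hiD'⟩
    have hpick' : pick (Dset G s' u) hD' = i := by
      apply pick_eq hiD'
      intro j hj
      rcases mem_Dset.1 hj with hjs' | ⟨⟨u', hu'⟩, hins'⟩
      · rcases Finset.mem_insert.1 hjs' with rfl | hjs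
        · exact le_refl _
        · exact pick_min _ _ (mem_Dset.2 (Or.inl hjs))
      · by_cases hji : j = i
        · subst hji; exact le_refl _
        · -- j is in the initial alphabet of u, commutes with i, and j ∪ s is independent
          have hnadjji : ¬ G.Adj j i :=
            hins' j (Finset.mem_insert_self _ _)
              i (Finset.mem_insert_of_mem (Finset.mem_insert_self _ _))
          have hwj : w = (u' * gen G i) * gen G j := by
            rw [huspec, hu', mul_assoc, mul_assoc, gen_comm hnadjji]
          apply pick_min
          refine mem_Dset.2 (Or.inr ⟨⟨u' * gen G i, hwj⟩, ?_⟩)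
          refine indepP_mono ?_ hins'
          intro x hx
          rcases Finset.mem_insert.1 hx with rfl | hx
          · exact Finset.mem_insert_self _ _
          · exact Finset.mem_insert_of_mem (Finset.mem_insert_of_mem hx)
    have hg2 : ginv G ⟨s', u⟩ = ⟨s, w⟩ := by
      simp only [ginv]
      rw [dif_pos hD', hpick', if_pos (Finset.mem_insert_self i s)]
      rw [Finset.erase_insert his, ← huspec]
    exact ⟨s', u, hg1, hind', hsum', Or.inl hcard, hg2⟩

end CFaux

namespace CFaux
open List FreeMonoid Finset

set_option linter.unusedSectionVars false
set_option maxHeartbeats 1000000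

variable {V : Type*} [Fintype V] [DecidableEq V] {G : SimpleGraph V}

/-- the key cancellation: for `α ≠ 0` the signed sum over pairs vanishes. -/
lemma key_sum [DecidableRel G.Adj] {α : V →₀ ℕ} (hα : α ≠ 0) :
    ∑ s ∈ Finset.univ.filter (fun s : Finset V => ∀ x ∈ s, ∀ y ∈ s, ¬ G.Adj x y),
      (if gam s ≤ α then ((-1 : ℚ)) ^ s.card * ((Tset G (α - gam s)).card : ℚ) else 0) = 0 := by
  classical
  rw [← Finset.sum_filter]
  set F : Finset (Finset V) :=
    (Finset.univ.filter (fun s : Finset V => ∀ x ∈ s, ∀ y ∈ s, ¬ G.Adj x y)).filter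
      (fun s => gam s ≤ α) with hF
  have hterm : ∀ s ∈ F, ((-1 : ℚ)) ^ s.card * ((Tset G (α - gam s)).card : ℚ)
      = ∑ _w ∈ Tset G (α - gam s), (-1 : ℚ) ^ s.card := by
    intro s _
    rw [Finset.sum_const, nsmul_eq_mul, mul_comm]
  rw [Finset.sum_congr rfl hterm]
  rw [Finset.sum_sigma' F (fun s => Tset G (α - gam s)) (fun s _ => (-1 : ℚ) ^ s.card)]
  -- characterize membership in the sigma set
  have hmem : ∀ x : (_ : Finset V) × TraceMonoid G,
      x ∈ F.sigma (fun s => Tset G (α - gam s)) ↔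
        indepP G x.1 ∧ gam x.1 + cnt G x.2 = α := by
    intro x
    rw [Finset.mem_sigma, hF, Finset.mem_filter, Finset.mem_filter, mem_Tset]
    constructor
    · rintro ⟨⟨⟨-, hind⟩, hle⟩, hcnt⟩
      exact ⟨hind, by rw [hcnt, add_tsub_cancel_of_le hle]⟩
    · rintro ⟨hind, hsum⟩
      have hle : gam x.1 ≤ α := by rw [← hsum]; exact le_self_add
      refine ⟨⟨⟨Finset.mem_univ _, hind⟩, hle⟩, ?_⟩
      rw [← hsum, add_tsub_cancel_left]
  refine Finset.sum_involution (fun x _ => ginv G x) ?_ ?_ ?_ ?_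
  · rintro ⟨s, w⟩ hx
    obtain ⟨hind, hsum⟩ := (hmem _).1 hx
    replace hind : indepP G s := hind
    replace hsum : gam s + cnt G w = α := hsum
    obtain ⟨s', w', hg1, -, -, hcard, -⟩ := ginv_spec hα hind hsum
    show (-1 : ℚ) ^ s.card + (-1 : ℚ) ^ (ginv G ⟨s, w⟩).1.card = 0
    rw [hg1]
    rcases hcard with h | h
    · show (-1 : ℚ) ^ s.card + (-1 : ℚ) ^ s'.card = 0
      rw [h, pow_succ]; ring
    · show (-1 : ℚ) ^ s.card + (-1 : ℚ) ^ s'.card = 0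
      rw [h, pow_succ]; ring
  · rintro ⟨s, w⟩ hx _
    obtain ⟨hind, hsum⟩ := (hmem _).1 hx
    replace hind : indepP G s := hind
    replace hsum : gam s + cnt G w = α := hsum
    obtain ⟨s', w', hg1, -, -, hcard, -⟩ := ginv_spec hα hind hsum
    show ginv G ⟨s, w⟩ ≠ ⟨s, w⟩
    rw [hg1]
    intro heq
    have hss : s' = s := congrArg Sigma.fst heq
    subst hss
    omega
  · rintro ⟨s, w⟩ hx
    obtain ⟨hind, hsum⟩ := (hmem _).1 hx
    replace hind : indepP G s := hind
    replace hsum : gam s + cnt G w = α := hsum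
    obtain ⟨s', w', hg1, hind', hsum', -, -⟩ := ginv_spec hα hind hsum
    show ginv G ⟨s, w⟩ ∈ _
    rw [hg1, hmem]
    exact ⟨hind', hsum'⟩
  · rintro ⟨s, w⟩ hx
    obtain ⟨hind, hsum⟩ := (hmem _).1 hx
    replace hind : indepP G s := hind
    replace hsum : gam s + cnt G w = α := hsum
    obtain ⟨s', w', hg1, -, -, -, hg2⟩ := ginv_spec hα hind hsum
    show ginv G (ginv G ⟨s, w⟩) = ⟨s, w⟩
    rw [hg1, hg2]

end CFaux


/-- Cartier–Foata / denominator identity for free partially commutative Lie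
algebras: `H(U(n⁺)) = (Σ_{γ ∈ Ω} (-1)^{ht γ} e^γ)⁻¹`, i.e. the signed independent-set
series times the generating series of the trace monoid equals `1`. -/
theorem stmt19 {V : Type*} [Fintype V] [DecidableEq V] (G : SimpleGraph V)
    [DecidableRel G.Adj] :
    indepSeries G * traceSeries G = 1 := by
  classical
  apply MvPowerSeries.ext
  intro α
  rw [MvPowerSeries.coeff_one]
  rw [indepSeries, Finset.sum_mul, map_sum]
  have hts : ∀ β : V →₀ ℕ, MvPowerSeries.coeff β (traceSeries G)
      = ((CFaux.Tset G β).card : ℚ) := by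
    intro β
    rw [MvPowerSeries.coeff_apply, traceSeries]
    congr 1
    have hiff : ∀ w : TraceMonoid G,
        (∃ L : List V, traceMk G L = w ∧ ∀ v, L.count v = β v) ↔ w ∈ CFaux.Tset G β := by
      intro w
      rw [CFaux.mem_Tset]
      constructor
      · rintro ⟨L, rfl, hc⟩
        ext v
        rw [CFaux.cnt_traceMk, hc v]
      · intro hw
        obtain ⟨L, rfl⟩ := CFaux.traceMk_surjective G w
        refine ⟨L, rfl, fun v => ?_⟩
        rw [← CFaux.cnt_traceMk (G := G) L v, hw]
    rw [Nat.card_congr (Equiv.subtypeEquivRight hiff), Nat.card_eq_finsetCard]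
  have hco : ∀ s : Finset V,
      MvPowerSeries.coeff α
        (MvPowerSeries.monomial (∑ i ∈ s, Finsupp.single i 1) ((-1 : ℚ) ^ s.card)
          * traceSeries G)
      = if CFaux.gam s ≤ α then ((-1 : ℚ)) ^ s.card * ((CFaux.Tset G (α - CFaux.gam s)).card : ℚ)
        else 0 := by
    intro s
    rw [MvPowerSeries.coeff_monomial_mul]
    rw [CFaux.gam, hts]
  rw [Finset.sum_congr rfl (fun s _ => hco s)]
  by_cases hα : α = 0
  · subst hα
    rw [if_pos rfl]
    rw [Finset.sum_eq_single_of_mem (∅ : Finset V)]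
    · rw [CFaux.gam_empty, if_pos le_rfl, tsub_zero, CFaux.Tset_zero]
      simp
    · rw [Finset.mem_filter]
      exact ⟨Finset.mem_univ _, fun x hx => by simp at hx⟩
    · intro s _ hs
      rw [if_neg]
      intro hle
      exact hs (CFaux.eq_empty_of_gam_eq_zero (le_antisymm hle zero_le))
  · rw [if_neg hα]
    exact CFaux.key_sum hα
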